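/- Let λ > 0, c > 0, T ∈ ℕ with T ≥ 1, and for 1 ≤ t ≤ T define Δ_t = (c/t)·∏_{s=t+1}^{T} (1 − cλ/s) (empty product = 1). Then: (i) for every 1 ≤ t ≤ T−1 with 1 − cλ/(t+1) ≠ 0, Δ_{t+1}²/Δ_t² = (1/(1 + (1 − cλ)/t))²; (ii) if cλ < 1 then Δ_1² > Δ_2² > … > Δ_T² > 0 (the sequence Δ_t² is strictly decreasing); (iii) if cλ = 1 then Δ_t = c/T for all t; (iv) if 1 < cλ < 3 then Δ_1² ≤ Δ_2² ≤ … ≤ Δ_T² (the sequence Δ_t² is nondecreasing). -/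

import Mathlib

open Finset

/-- Properties of the noise accumulation weights
`Δ t = (c/t) ∏_{s=t+1}^T (1 - cλ/s)` of SGD with learning rate `c/t`:
(i) the ratio identity `Δ_{t+1}² / Δ_t² = (1/(1 + (1-cλ)/t))²` (stated
multiplicatively), (ii) if `cλ < 1` the sequence `Δ_t²` is strictly decreasing
and `Δ_T² > 0`, (iii) if `cλ = 1` then `Δ t = c/T` for all `t`, and (iv) if
`1 < cλ < 3` the sequence `Δ_t²` is nondecreasing. -/
theorem statement_7 (lam c : ℝ) (hlam : 0 < lam) (hc : 0 < c)
    (T : ℕ) (hT : 1 ≤ T) (Δ : ℕ → ℝ)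
    (hΔ : ∀ t, Δ t = (c / t) * ∏ s ∈ Finset.Icc (t + 1) T, (1 - c * lam / s)) :
    (∀ t : ℕ, 1 ≤ t → t + 1 ≤ T → 1 - c * lam / (t + 1 : ℝ) ≠ 0 →
        (Δ (t + 1)) ^ 2 = (Δ t) ^ 2 * (1 / (1 + (1 - c * lam) / t)) ^ 2) ∧
    (c * lam < 1 →
        (∀ t : ℕ, 1 ≤ t → t + 1 ≤ T → (Δ (t + 1)) ^ 2 < (Δ t) ^ 2) ∧ 0 < (Δ T) ^ 2) ∧
    (c * lam = 1 → ∀ t : ℕ, 1 ≤ t → t ≤ T → Δ t = c / T) ∧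
    (1 < c * lam → c * lam < 3 →
        ∀ t : ℕ, 1 ≤ t → t + 1 ≤ T → (Δ t) ^ 2 ≤ (Δ (t + 1)) ^ 2) := by
  have key : ∀ t : ℕ, 1 ≤ t → t + 1 ≤ T →
      Δ t = Δ (t + 1) * (((t : ℝ) + 1 - c * lam) / t) := by
    intro t ht htT
    have ht0 : (t : ℝ) ≠ 0 := by positivity
    have ht1 : (t : ℝ) + 1 ≠ 0 := by positivity
    have hsplit : (∏ s ∈ Finset.Icc (t + 1) T, (1 - c * lam / (s : ℝ)))
        = (1 - c * lam / (((t + 1 : ℕ)) : ℝ)) *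
          ∏ s ∈ Finset.Icc (t + 2) T, (1 - c * lam / (s : ℝ)) := by
      have : Finset.Icc (t + 1) T = insert (t + 1) (Finset.Icc (t + 2) T) := by
        symm
        rw [show t + 2 = (t + 1) + 1 from rfl, Finset.Icc_add_one_left_eq_Ioc,
          Finset.Ioc_insert_left htT]
      rw [this, Finset.prod_insert (by simp)]
    rw [hΔ t, hΔ (t + 1), hsplit]
    push_cast
    field_simp
  have hΔT : Δ T = c / T := by
    rw [hΔ T, Finset.Icc_eq_empty (by omega), Finset.prod_empty, mul_one]
  refine ⟨?_, ?_, ?_, ?_⟩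
  · intro t ht htT hne
    have ht0 : (t : ℝ) ≠ 0 := by positivity
    have hr : 1 + (1 - c * lam) / (t : ℝ) = ((t : ℝ) + 1 - c * lam) / t := by
      field_simp
      ring
    have hrne : ((t : ℝ) + 1 - c * lam) / t ≠ 0 := by
      have h1 : ((t : ℝ) + 1) ≠ 0 := by positivity
      have : (t : ℝ) + 1 - c * lam ≠ 0 := by
        intro h
        apply hne
        field_simp
        linarith
      exact div_ne_zero this ht0
    rw [key t ht htT, hr]
    calc Δ (t + 1) ^ 2
        = Δ (t + 1) ^ 2 * ((((t : ℝ) + 1 - c * lam) / t) ^ 2 *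
            ((((t : ℝ) + 1 - c * lam) / t) ^ 2)⁻¹) := by
          rw [mul_inv_cancel₀ (pow_ne_zero 2 hrne), mul_one]
      _ = (Δ (t + 1) * (((t : ℝ) + 1 - c * lam) / t)) ^ 2 *
            (1 / (((t : ℝ) + 1 - c * lam) / t)) ^ 2 := by
          rw [one_div, inv_pow]; ring
  · intro hcl
    have hpos : ∀ t : ℕ, 1 ≤ t → 0 < Δ t := by
      intro t ht
      rw [hΔ t]
      have ht0 : (0 : ℝ) < t := by exact_mod_cast ht
      apply mul_pos (by positivity)
      apply Finset.prod_pos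
      intro s hs
      simp only [Finset.mem_Icc] at hs
      have hs1 : 1 ≤ s := by omega
      have hs0 : (1 : ℝ) ≤ (s : ℝ) := by exact_mod_cast hs1
      have : c * lam / s < 1 := by
        rw [div_lt_one (by linarith)]
        linarith
      linarith
    constructor
    · intro t ht htT
      have ht0 : (0 : ℝ) < t := by exact_mod_cast ht
      have hr1 : 1 < ((t : ℝ) + 1 - c * lam) / t := by
        rw [lt_div_iff₀ ht0]
        linarith
      have hp : 0 < Δ (t + 1) := hpos (t + 1) (by omega)
      have := key t ht htT
      rw [this, mul_pow]
      have h1 : (1 : ℝ) < (((t : ℝ) + 1 - c * lam) / t) ^ 2 := by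
        nlinarith
      nlinarith [sq_nonneg (Δ (t + 1)), pow_pos hp 2]
    · have := hpos T hT
      positivity
  · intro hcl
    have aux : ∀ k t : ℕ, t + k = T → 1 ≤ t → Δ t = c / T := by
      intro k
      induction k with
      | zero => intro t h ht; subst h; simpa using hΔT
      | succ n ih =>
        intro t h ht
        have htT : t + 1 ≤ T := by omega
        have ht0 : (t : ℝ) ≠ 0 := by positivity
        rw [key t ht htT, ih (t + 1) (by omega) (by omega), hcl]
        field_simp
        ring
    intro t ht htT
    exact aux (T - t) t (by omega) ht
  · intro h1 h3 t ht htT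
    have ht0 : (0 : ℝ) < t := by exact_mod_cast ht
    have ht1 : (1 : ℝ) ≤ t := by exact_mod_cast ht
    have hr2 : (((t : ℝ) + 1 - c * lam) / t) ^ 2 ≤ 1 := by
      rw [div_pow, div_le_one (by positivity)]
      nlinarith
    rw [key t ht htT, mul_pow]
    nlinarith [sq_nonneg (Δ (t + 1))]
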